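/- Let n ≥ 2, let M be an n × n real matrix, and let A be the n × n real matrix whose diagonal entries are all 2 and whose off-diagonal entries are all 1 (i.e., A = 1 + J where J is the all-ones matrix). Then c(c(M·A)·A) = (n+1)^(n−1) · (det M)^(n−2) · M, where c(X) denotes the cofactor matrix of X. -/
import Mathlib


open scoped RealInnerProductSpace BigOperators

/-- The cofactor matrix of a square matrix: the transpose of the adjugate,
so that `cof X * Xᵀ = (det X) • 1`. -/
noncomputable def cof {n : ℕ} (X : Matrix (Fin n) (Fin n) ℝ) : Matrix (Fin n) (Fin n) ℝ :=
  (Matrix.adjugate X).transpose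

open Matrix in
theorem cof_cof_iteration (n : ℕ) (hn : 2 ≤ n) (M A : Matrix (Fin n) (Fin n) ℝ)
    (hA : ∀ i j, A i j = if i = j then 2 else 1) :
    cof (cof (M * A) * A) = (((n : ℝ) + 1) ^ (n - 1) * M.det ^ (n - 2)) • M := by
  have hAeq : A = 1 + Matrix.replicateCol Unit (fun _ => (1:ℝ)) * Matrix.replicateRow Unit (fun _ => (1:ℝ)) := by
    ext i j
    simp [hA i j, Matrix.one_apply, Matrix.mul_apply, Matrix.replicateCol, Matrix.replicateRow]
    split <;> ring
  have hdetA : A.det = (n : ℝ) + 1 := by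
    rw [hAeq, Matrix.det_one_add_replicateCol_mul_replicateRow]
    simp [dotProduct]
    ring
  have hAsymm : Aᵀ = A := by
    ext i j
    simp only [Matrix.transpose_apply, hA]
    by_cases h : i = j <;> simp [h, eq_comm]
  have hcard : Fintype.card (Fin n) ≠ 1 := by simp; omega
  have hadj2 : Matrix.adjugate (Matrix.adjugate ((M * A)ᵀ)) =
      (M * A).det ^ (n - 2) • ((M * A)ᵀ) := by
    simpa [Matrix.det_transpose, mul_comm] using Matrix.adjugate_adjugate ((M * A)ᵀ) hcard
  have key : Matrix.adjugate (cof (M * A) * A)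
      = ((M * A).det ^ (n - 2) * A.det) • Mᵀ := by
    rw [cof, Matrix.adjugate_mul_distrib, Matrix.adjugate_transpose, hadj2]
    rw [Matrix.mul_smul, Matrix.transpose_mul, hAsymm,
      ← Matrix.mul_assoc, Matrix.adjugate_mul, Matrix.smul_mul, Matrix.one_mul, smul_smul]
  rw [cof, key, Matrix.transpose_smul, Matrix.transpose_transpose]
  congr 1
  rw [Matrix.det_mul, hdetA, mul_pow]
  rw [show ((n:ℝ) + 1) ^ (n - 1) = ((n:ℝ) + 1) ^ (n - 2) * ((n:ℝ) + 1) from by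
    rw [← pow_succ]; congr 1; omega]
  ring
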